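/- Let φ be holomorphic on C with D(φf) = φ(D+n)f for all holomorphic f, where D = −(1/(2πi))d/dz and n > 0. Let N be a nilpotent endomorphism of a finite-dimensional complex vector space V. If f is holomorphic with f(z+τ) = φ(z)f(z), then w(z) := exp(DN/n)(f)(z)·v satisfies w(z+τ) = φ(z)·exp(N)·w(z) for every v ∈ V. -/

import Mathlib

open Complex

/-- The differential operator `D = −(1/(2πi)) d/dz` on holomorphic functions. -/
noncomputable def Dop (f : ℂ → ℂ) : ℂ → ℂ :=
  fun z => -(1 / (2 * Real.pi * Complex.I)) * deriv f z

open Finset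

lemma Dop_diff {g : ℂ → ℂ} (hg : Differentiable ℂ g) : Differentiable ℂ (Dop g) := by
  have h1 : AnalyticOnNhd ℂ (deriv g) Set.univ :=
    (analyticOnNhd_univ_iff_differentiable.mpr hg).deriv
  have hd : Differentiable ℂ (deriv g) := analyticOnNhd_univ_iff_differentiable.mp h1
  exact (differentiable_const _).mul hd

lemma Dop_iter_diff {f : ℂ → ℂ} (hf : Differentiable ℂ f) (k : ℕ) :
    Differentiable ℂ (Dop^[k] f) := by
  induction k with
  | zero => simpa using hf
  | succ k ih => rw [Function.iterate_succ_apply']; exact Dop_diff ih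

lemma Dop_const_mul (c : ℂ) {g : ℂ → ℂ} {z : ℂ} (hg : DifferentiableAt ℂ g z) :
    Dop (fun u => c * g u) z = c * Dop g z := by
  unfold Dop; rw [deriv_const_mul c hg]; ring

lemma Dop_sum {ι : Type*} (s : Finset ι) (g : ι → ℂ → ℂ) {z : ℂ}
    (hg : ∀ i ∈ s, DifferentiableAt ℂ (g i) z) :
    Dop (fun u => ∑ i ∈ s, g i u) z = ∑ i ∈ s, Dop (g i) z := by
  unfold Dop; rw [deriv_fun_sum hg, Finset.mul_sum]

lemma pascal_sum (k : ℕ) (a : ℕ → ℂ) (n : ℂ) :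
    ∑ j ∈ range (k+2), ((k+1).choose j : ℂ) * n ^ (k+1-j) * a j
    = ∑ j ∈ range (k+1), (k.choose j : ℂ) * n ^ (k-j) * a (j+1)
      + n * ∑ j ∈ range (k+1), (k.choose j : ℂ) * n ^ (k-j) * a j := by
  rw [Finset.sum_range_succ' (fun j => ((k+1).choose j : ℂ) * n ^ (k+1-j) * a j) (k+1)]
  have h1 : ∀ i ∈ range (k+1), ((k+1).choose (i+1) : ℂ) * n ^ (k+1-(i+1)) * a (i+1)
      = (k.choose i : ℂ) * n ^ (k-i) * a (i+1) + (k.choose (i+1) : ℂ) * n ^ (k-i) * a (i+1) := by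
    intro i _
    rw [Nat.choose_succ_succ, Nat.succ_sub_succ]
    push_cast; ring
  rw [Finset.sum_congr rfl h1, Finset.sum_add_distrib]
  have h2 : ∑ i ∈ range (k+1), (k.choose (i+1) : ℂ) * n ^ (k-i) * a (i+1)
      + ((k+1).choose 0 : ℂ) * n ^ (k+1-0) * a 0
      = n * ∑ j ∈ range (k+1), (k.choose j : ℂ) * n ^ (k-j) * a j := by
    rw [Finset.sum_range_succ' (fun j => (k.choose j : ℂ) * n ^ (k-j) * a j) k, mul_add]
    have h3 : ∑ i ∈ range (k+1), (k.choose (i+1) : ℂ) * n ^ (k-i) * a (i+1)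
        = n * ∑ i ∈ range k, (k.choose (i+1) : ℂ) * n ^ (k-(i+1)) * a (i+1) := by
      rw [Finset.sum_range_succ, Nat.choose_succ_self]
      rw [Finset.mul_sum]
      simp only [Nat.cast_zero, zero_mul, add_zero]
      refine Finset.sum_congr rfl fun i hi => ?_
      have hik := Finset.mem_range.mp hi
      have : k - i = (k - (i+1)) + 1 := by omega
      rw [this, pow_succ]
      ring
    rw [h3]
    congr 1
    simp [pow_succ]; ring
  rw [add_assoc, h2]

lemma key_iter (n : ℕ) (τ : ℂ) (φ f : ℂ → ℂ) (hφ : Differentiable ℂ φ)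
    (hf : Differentiable ℂ f)
    (hrule : ∀ g : ℂ → ℂ, Differentiable ℂ g →
      ∀ z : ℂ, Dop (fun u => φ u * g u) z = φ z * (Dop g z + (n : ℂ) * g z))
    (hper : ∀ z : ℂ, f (z + τ) = φ z * f z) :
    ∀ k : ℕ, ∀ z : ℂ, Dop^[k] f (z + τ)
      = φ z * ∑ j ∈ range (k+1), (k.choose j : ℂ) * (n : ℂ) ^ (k-j) * Dop^[j] f z := by
  intro k
  induction k with
  | zero => intro z; simpa using hper z
  | succ k ih =>
    intro z
    set S : ℂ → ℂ := fun u => ∑ j ∈ range (k+1), (k.choose j : ℂ) * (n : ℂ) ^ (k-j) * Dop^[j] f u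
      with hS
    have hSd : Differentiable ℂ S :=
      Differentiable.fun_sum fun j _ => (differentiable_const _).fun_mul (Dop_iter_diff hf j)
    have h1 : (fun u => Dop^[k] f (u + τ)) = fun u => φ u * S u := funext fun u => ih u
    have h2 : Dop^[k+1] f (z + τ) = Dop (fun u => Dop^[k] f (u + τ)) z := by
      rw [Function.iterate_succ_apply']
      unfold Dop
      rw [deriv_comp_add_const]
    rw [h2, h1, hrule S hSd z]
    have h3 : Dop S z = ∑ j ∈ range (k+1), (k.choose j : ℂ) * (n : ℂ) ^ (k-j) * Dop^[j+1] f z := by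
      rw [hS, Dop_sum _ _ (fun j _ => ((differentiable_const _).fun_mul (Dop_iter_diff hf j)).differentiableAt)]
      refine Finset.sum_congr rfl fun j _ => ?_
      rw [Dop_const_mul _ ((Dop_iter_diff hf j).differentiableAt), Function.iterate_succ_apply']
    rw [h3, hS]
    rw [pascal_sum k (fun j => Dop^[j] f z) (n : ℂ)]

/-- If `f(z+τ) = φ(z)f(z)` and `D(φg) = φ(D+n)g` for all holomorphic `g`, then for a
nilpotent endomorphism `N` of a finite-dimensional complex vector space `V` and any `v ∈ V`,
the function `w(z) = exp(DN/n)(f)(z)·v = Σ_k (1/(k! nᵏ)) Dᵏf(z) · Nᵏ v` satisfies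
`w(z+τ) = φ(z)·exp(N)·w(z)`. -/
theorem section_of_twisted_bundle
    (V : Type*) [NormedAddCommGroup V] [NormedSpace ℂ V] [FiniteDimensional ℂ V]
    (N : V →L[ℂ] V) (hN : IsNilpotent N) (n : ℕ) (hn : 0 < n) (τ : ℂ)
    (φ f : ℂ → ℂ) (hφ : Differentiable ℂ φ) (hf : Differentiable ℂ f)
    (hrule : ∀ g : ℂ → ℂ, Differentiable ℂ g →
      ∀ z : ℂ, Dop (fun u => φ u * g u) z = φ z * (Dop g z + (n : ℂ) * g z))
    (hper : ∀ z : ℂ, f (z + τ) = φ z * f z) (v : V) :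
    ∀ z : ℂ,
      (∑' k : ℕ, ((Dop^[k] f (z + τ)) / ((k.factorial : ℂ) * (n : ℂ) ^ k)) • ((N ^ k) v)) =
        φ z • (NormedSpace.exp N)
          (∑' k : ℕ, ((Dop^[k] f z) / ((k.factorial : ℂ) * (n : ℂ) ^ k)) • ((N ^ k) v)) := by
  intro z
  obtain ⟨m, hm⟩ := hN
  have hNk : ∀ k, m ≤ k → (N ^ k : V →L[ℂ] V) = 0 := fun k hk => pow_eq_zero_of_le hk hm
  have hNkv : ∀ k, m ≤ k → (N ^ k) v = 0 := fun k hk => by rw [hNk k hk]; rfl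
  have hn0 : (n : ℂ) ≠ 0 := Nat.cast_ne_zero.mpr hn.ne'
  have hfac : ∀ k : ℕ, (k.factorial : ℂ) ≠ 0 := fun k => Nat.cast_ne_zero.mpr k.factorial_ne_zero
  -- reduce tsums to finite sums
  have htsum : ∀ w : ℂ, (∑' k : ℕ, ((Dop^[k] f w) / ((k.factorial : ℂ) * (n : ℂ) ^ k)) • ((N ^ k) v))
      = ∑ k ∈ range m, ((Dop^[k] f w) / ((k.factorial : ℂ) * (n : ℂ) ^ k)) • ((N ^ k) v) := by
    intro w
    refine tsum_eq_sum fun k hk => ?_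
    rw [hNkv k (by simpa using hk), smul_zero]
  have hexp : NormedSpace.exp N = ∑ i ∈ range m, (i.factorial : ℂ)⁻¹ • (N ^ i : V →L[ℂ] V) := by
    rw [NormedSpace.exp_eq_tsum (𝕂 := ℂ)]
    refine tsum_eq_sum fun i hi => ?_
    rw [hNk i (by simpa using hi), smul_zero]
  rw [htsum, htsum, hexp]
  -- expand RHS
  have hRHS : φ z • (∑ i ∈ range m, (i.factorial : ℂ)⁻¹ • (N ^ i : V →L[ℂ] V))
        (∑ j ∈ range m, ((Dop^[j] f z) / ((j.factorial : ℂ) * (n : ℂ) ^ j)) • ((N ^ j) v))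
      = ∑ j ∈ range m, ∑ i ∈ range m,
          (φ z * (i.factorial : ℂ)⁻¹ * ((Dop^[j] f z) / ((j.factorial : ℂ) * (n : ℂ) ^ j)))
            • ((N ^ (i + j)) v) := by
    rw [Finset.sum_comm (s := range m) (t := range m)]
    rw [ContinuousLinearMap.sum_apply, Finset.smul_sum]
    refine Finset.sum_congr rfl fun i _ => ?_
    rw [ContinuousLinearMap.smul_apply, map_sum, Finset.smul_sum, Finset.smul_sum]
    refine Finset.sum_congr rfl fun j _ => ?_
    rw [map_smul, pow_add, ContinuousLinearMap.mul_apply, smul_smul, smul_smul]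
  rw [hRHS]
  -- expand LHS using the key lemma
  have hkey := key_iter n τ φ f hφ hf hrule hper
  calc ∑ k ∈ range m, ((Dop^[k] f (z + τ)) / ((k.factorial : ℂ) * (n : ℂ) ^ k)) • ((N ^ k) v)
      = ∑ k ∈ range m, ∑ j ∈ range m,
          ((φ z * ((k.choose j : ℂ) * (n : ℂ) ^ (k-j) * Dop^[j] f z))
            / ((k.factorial : ℂ) * (n : ℂ) ^ k)) • ((N ^ k) v) := by
        refine Finset.sum_congr rfl fun k hk => ?_
        rw [hkey k z, Finset.mul_sum, Finset.sum_div, Finset.sum_smul]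
        refine Finset.sum_subset (fun j hj => ?_) (fun j _ hj => ?_)
        · have hkm := Finset.mem_range.mp hk
          simp only [Finset.mem_range] at hj ⊢
          omega
        have hjk : k < j := by
          simp only [Finset.mem_range, not_lt] at hj
          omega
        rw [Nat.choose_eq_zero_of_lt hjk]
        simp
    _ = ∑ j ∈ range m, ∑ k ∈ range m,
          ((φ z * ((k.choose j : ℂ) * (n : ℂ) ^ (k-j) * Dop^[j] f z))
            / ((k.factorial : ℂ) * (n : ℂ) ^ k)) • ((N ^ k) v) := Finset.sum_comm
    _ = ∑ j ∈ range m, ∑ i ∈ range m,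
          (φ z * (i.factorial : ℂ)⁻¹ * ((Dop^[j] f z) / ((j.factorial : ℂ) * (n : ℂ) ^ j)))
            • ((N ^ (i + j)) v) := by
        refine Finset.sum_congr rfl fun j hj => ?_
        have hjm := Finset.mem_range.mp hj
        rw [Finset.range_eq_Ico]
        calc ∑ k ∈ Finset.Ico 0 m,
              ((φ z * ((k.choose j : ℂ) * (n : ℂ) ^ (k-j) * Dop^[j] f z))
                / ((k.factorial : ℂ) * (n : ℂ) ^ k)) • ((N ^ k) v)
            = ∑ k ∈ Finset.Ico j m,
              ((φ z * ((k.choose j : ℂ) * (n : ℂ) ^ (k-j) * Dop^[j] f z))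
                / ((k.factorial : ℂ) * (n : ℂ) ^ k)) • ((N ^ k) v) := by
              refine (Finset.sum_subset (Finset.Ico_subset_Ico (Nat.zero_le j) le_rfl)
                (fun k hk hk2 => ?_)).symm
              have hkj : k < j := by
                simp only [Finset.mem_Ico] at hk hk2
                omega
              rw [Nat.choose_eq_zero_of_lt hkj]
              simp
          _ = ∑ i ∈ range (m - j),
              ((φ z * (((j+i).choose j : ℂ) * (n : ℂ) ^ ((j+i)-j) * Dop^[j] f z))
                / (((j+i).factorial : ℂ) * (n : ℂ) ^ (j+i))) • ((N ^ (j+i)) v) := by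
              rw [Finset.sum_Ico_eq_sum_range]
          _ = ∑ i ∈ range (m - j),
              (φ z * (i.factorial : ℂ)⁻¹ * ((Dop^[j] f z) / ((j.factorial : ℂ) * (n : ℂ) ^ j)))
                • ((N ^ (i + j)) v) := by
              refine Finset.sum_congr rfl fun i _ => ?_
              have hc : ((j+i).choose j : ℂ) * (j.factorial : ℂ) * (i.factorial : ℂ)
                  = ((j+i).factorial : ℂ) := by
                have := Nat.choose_mul_factorial_mul_factorial (Nat.le_add_right j i)
                rw [Nat.add_sub_cancel_left] at this
                exact_mod_cast this
              have hC : ((j+i).choose j : ℂ) ≠ 0 :=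
                Nat.cast_ne_zero.mpr (Nat.choose_pos (Nat.le_add_right j i)).ne'
              rw [Nat.add_sub_cancel_left, add_comm i j]
              congr 1
              rw [pow_add, ← hc]
              have hni : (n:ℂ)^i ≠ 0 := pow_ne_zero _ hn0
              have hnj : (n:ℂ)^j ≠ 0 := pow_ne_zero _ hn0
              field_simp
          _ = ∑ i ∈ Finset.Ico 0 m,
              (φ z * (i.factorial : ℂ)⁻¹ * ((Dop^[j] f z) / ((j.factorial : ℂ) * (n : ℂ) ^ j)))
                • ((N ^ (i + j)) v) := by
              refine Finset.sum_subset (fun i hi => ?_) (fun i hi hi2 => ?_)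
              · simp only [Finset.mem_range, Finset.mem_Ico] at hi ⊢
                omega
              · have : m ≤ i + j := by
                  simp only [Finset.mem_range, Finset.mem_Ico] at hi hi2
                  omega
                rw [hNkv _ this, smul_zero]
    _ = _ := rfl
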